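/- Let G = (V,E) be a finite undirected graph, let G' = (V',E') be the ESC reduction graph of G, and let C ⊆ E' be an edge set such that the directed graph (V', E' \ C) is singly-connected. Then G has a vertex cover U with |U| ≤ |C|. -/

import Mathlib

/-- A simple (directed) path from `v` to `w` in the directed graph with edge relation `E`:
a nonempty list of pairwise distinct vertices starting at `v`, ending at `w`,
with consecutive vertices joined by edges. -/
def IsSimplePath {V : Type*} (E : V → V → Prop) (v w : V) (p : List V) : Prop :=
  p.Chain' E ∧ p.head? = some v ∧ p.getLast? = some w ∧ p.Nodup

/-- A directed graph is singly-connected if for every pair of vertices there is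
at most one simple path between them. -/
def SinglyConnected {V : Type*} (E : V → V → Prop) : Prop :=
  ∀ v w : V, ∀ p q : List V, IsSimplePath E v w p → IsSimplePath E v w q → p = q

/-- The vertex set of the ESC reduction graph of an undirected graph `G`: two vertices
`v'`, `v''` for every vertex `v` of `G` and two vertices `e'`, `e''` for every edge `e`
of `G`. -/
def ESCVert {V : Type*} (G : SimpleGraph V) : Type _ :=
  (V ⊕ V) ⊕ (G.edgeSet ⊕ G.edgeSet)

/-- The vertex `v'` of the ESC reduction graph. -/
def ESCVert.vA {V : Type*} (G : SimpleGraph V) (v : V) : ESCVert G :=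
  Sum.inl (Sum.inl v)

/-- The vertex `v''` of the ESC reduction graph. -/
def ESCVert.vB {V : Type*} (G : SimpleGraph V) (v : V) : ESCVert G :=
  Sum.inl (Sum.inr v)

/-- The vertex `e'` of the ESC reduction graph. -/
def ESCVert.eA {V : Type*} (G : SimpleGraph V) (e : G.edgeSet) : ESCVert G :=
  Sum.inr (Sum.inl e)

/-- The vertex `e''` of the ESC reduction graph. -/
def ESCVert.eB {V : Type*} (G : SimpleGraph V) (e : G.edgeSet) : ESCVert G :=
  Sum.inr (Sum.inr e)

/-- The edge set of the ESC reduction graph of `G`: an edge `(v', v'')` for every vertex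
`v` of `G`, and edges `(e', u')`, `(e', w')`, `(u'', e'')`, `(w'', e'')` for every
undirected edge `e = {u, w}` of `G` (i.e. edges `(e', v')` and `(v'', e'')` for every
endpoint `v` of `e`). -/
def ESCEdges {V : Type*} (G : SimpleGraph V) : Set (ESCVert G × ESCVert G) :=
  {p | (∃ v : V, p = (ESCVert.vA G v, ESCVert.vB G v)) ∨
       (∃ (e : G.edgeSet) (v : V), v ∈ (e : Sym2 V) ∧ p = (ESCVert.eA G e, ESCVert.vA G v)) ∨
       (∃ (e : G.edgeSet) (v : V), v ∈ (e : Sym2 V) ∧ p = (ESCVert.vB G v, ESCVert.eB G e))}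

/-- A vertex cover of the undirected graph `G`: a set of vertices meeting every edge. -/
def IsVertexCover {V : Type*} (G : SimpleGraph V) (U : Set V) : Prop :=
  ∀ e ∈ G.edgeSet, ∃ v ∈ U, v ∈ e

/-- Label of an ESC edge: the `G`-vertex it involves. -/
def escLabel {V : Type*} (G : SimpleGraph V) : ESCVert G × ESCVert G → Option V
  | (Sum.inl (Sum.inl v), _) => some v
  | (Sum.inl (Sum.inr v), _) => some v
  | (_, Sum.inl (Sum.inl v)) => some v
  | _ => none

/-- The four vertices `e'`, `v'`, `v''`, `e''` are pairwise distinct. -/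
lemma esc_nodup {V : Type*} (G : SimpleGraph V) (e : G.edgeSet) (v : V) :
    [ESCVert.eA G e, ESCVert.vA G v, ESCVert.vB G v, ESCVert.eB G e].Nodup := by
  have h1 : ESCVert.eA G e ≠ ESCVert.vA G v := fun h => by simp [ESCVert.eA, ESCVert.vA] at h
  have h2 : ESCVert.eA G e ≠ ESCVert.vB G v := fun h => by simp [ESCVert.eA, ESCVert.vB] at h
  have h3 : ESCVert.eA G e ≠ ESCVert.eB G e :=
    fun h => by simp [ESCVert.eA, ESCVert.eB] at h; exact Sum.inl_ne_inr (Sum.inr_injective h)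
  have h4 : ESCVert.vA G v ≠ ESCVert.vB G v :=
    fun h => by simp [ESCVert.vA, ESCVert.vB] at h; exact Sum.inl_ne_inr (Sum.inl_injective h)
  have h5 : ESCVert.vA G v ≠ ESCVert.eB G e := fun h => by simp [ESCVert.vA, ESCVert.eB] at h
  have h6 : ESCVert.vB G v ≠ ESCVert.eB G e := fun h => by simp [ESCVert.vB, ESCVert.eB] at h
  simp [h1, h2, h3, h4, h5, h6]

/-- if removing an edge set `C ⊆ E'` from the ESC reduction graph of a
finite undirected graph `G` leaves a singly-connected directed graph, then `G` has a
vertex cover of size at most `|C|`. -/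
theorem vertexCover_of_esc {V : Type*} [Finite V] (G : SimpleGraph V)
    (C : Set (ESCVert G × ESCVert G)) (hC : C ⊆ ESCEdges G)
    (hsc : SinglyConnected (fun a b : ESCVert G => (a, b) ∈ ESCEdges G \ C)) :
    ∃ U : Set V, IsVertexCover G U ∧ U.ncard ≤ C.ncard := by
  classical
  have hfin : Finite (ESCVert G) := by
    unfold ESCVert; infer_instance
  set U : Set V := {v : V | (ESCVert.vA G v, ESCVert.vB G v) ∈ C ∨
    (∃ e : G.edgeSet, (ESCVert.eA G e, ESCVert.vA G v) ∈ C) ∨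
    (∃ e : G.edgeSet, (ESCVert.vB G v, ESCVert.eB G e) ∈ C)} with hU
  refine ⟨U, ?_, ?_⟩
  · intro ε hε
    induction ε using Sym2.ind with
    | _ u w =>
      have hadj : G.Adj u w := hε
      have hne : u ≠ w := hadj.ne
      by_contra hcon
      push_neg at hcon
      have hu : u ∉ U := fun h => (hcon u h) (by simp)
      have hw : w ∉ U := fun h => (hcon w h) (by simp)
      rw [hU] at hu hw
      simp only [Set.mem_setOf_eq, not_or, not_exists] at hu hw
      set e : G.edgeSet := ⟨s(u,w), hε⟩ with he
      have hue : u ∈ (e : Sym2 V) := by simp [he]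
      have hwe : w ∈ (e : Sym2 V) := by simp [he]
      have hp : IsSimplePath (fun a b : ESCVert G => (a, b) ∈ ESCEdges G \ C)
          (ESCVert.eA G e) (ESCVert.eB G e)
          [ESCVert.eA G e, ESCVert.vA G u, ESCVert.vB G u, ESCVert.eB G e] := by
        refine ⟨?_, rfl, rfl, ?_⟩
        · refine List.isChain_cons_cons.2 ⟨⟨?_, hu.2.1 e⟩, List.isChain_cons_cons.2
            ⟨⟨?_, hu.1⟩, List.isChain_cons_cons.2 ⟨⟨?_, hu.2.2 e⟩, List.isChain_singleton _⟩⟩⟩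
          · exact Or.inr (Or.inl ⟨e, u, hue, rfl⟩)
          · exact Or.inl ⟨u, rfl⟩
          · exact Or.inr (Or.inr ⟨e, u, hue, rfl⟩)
        · exact esc_nodup G e _
      have hq : IsSimplePath (fun a b : ESCVert G => (a, b) ∈ ESCEdges G \ C)
          (ESCVert.eA G e) (ESCVert.eB G e)
          [ESCVert.eA G e, ESCVert.vA G w, ESCVert.vB G w, ESCVert.eB G e] := by
        refine ⟨?_, rfl, rfl, ?_⟩
        · refine List.isChain_cons_cons.2 ⟨⟨?_, hw.2.1 e⟩, List.isChain_cons_cons.2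
            ⟨⟨?_, hw.1⟩, List.isChain_cons_cons.2 ⟨⟨?_, hw.2.2 e⟩, List.isChain_singleton _⟩⟩⟩
          · exact Or.inr (Or.inl ⟨e, w, hwe, rfl⟩)
          · exact Or.inl ⟨w, rfl⟩
          · exact Or.inr (Or.inr ⟨e, w, hwe, rfl⟩)
        · exact esc_nodup G e _
      have := hsc _ _ _ _ hp hq
      simp only [List.cons.injEq, and_true, true_and] at this
      obtain ⟨h1, -⟩ := this
      simp only [ESCVert.vA] at h1
      exact hne (Sum.inl_injective (Sum.inl_injective h1))
  · have hsub : Option.some '' U ⊆ escLabel G '' C := by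
      rintro _ ⟨v, hv, rfl⟩
      rw [hU] at hv
      rcases hv with h | ⟨e, h⟩ | ⟨e, h⟩
      · exact ⟨_, h, rfl⟩
      · exact ⟨_, h, rfl⟩
      · exact ⟨_, h, rfl⟩
    calc U.ncard = (Option.some '' U).ncard :=
          (Set.ncard_image_of_injective U (Option.some_injective V)).symm
      _ ≤ (escLabel G '' C).ncard := Set.ncard_le_ncard hsub (C.toFinite.image _)
      _ ≤ C.ncard := Set.ncard_image_le C.toFinite
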